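/- Let n ≥ 1 and let 0 < r < R be real numbers. Define W(R) = {y ∈ ℝ^{n+1} : 0 < y₁² + ⋯ + yₙ² ≤ R² y₀² and y₀ > 0} and, for k = (k₁,…,kₙ) ∈ ℝⁿ, define W_k(r) = {y ∈ ℝ^{n+1} : 0 < y₁² + ⋯ + yₙ² ≤ r² (y₀ − Σᵢ kᵢ yᵢ)² and y₀ − Σᵢ kᵢ yᵢ > 0}. Then for every k ∈ ℝⁿ, W(R) is not contained in W_k(r); that is, there exists y ∈ W(R) with y ∉ W_k(r). -/
import Mathlib


/-- `W(R) = {y : 0 < y₁² + ⋯ + yₙ² ≤ R² y₀², y₀ > 0}` is never contained in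
`W_k(r) = {y : 0 < y₁² + ⋯ + yₙ² ≤ r² (y₀ − Σ kᵢ yᵢ)², y₀ − Σ kᵢ yᵢ > 0}` when `r < R`. -/
theorem shape_not_contained (n : ℕ) (hn : 1 ≤ n) (r R : ℝ) (hr : 0 < r) (hrR : r < R)
    (k : Fin n → ℝ) :
    ¬ ({y : Fin (n + 1) → ℝ |
          (0 < ∑ i : Fin n, (y i.succ) ^ 2 ∧ ∑ i : Fin n, (y i.succ) ^ 2 ≤ R ^ 2 * (y 0) ^ 2)
          ∧ 0 < y 0} ⊆
        {y : Fin (n + 1) → ℝ |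
          (0 < ∑ i : Fin n, (y i.succ) ^ 2 ∧
            ∑ i : Fin n, (y i.succ) ^ 2 ≤
              r ^ 2 * (y 0 - ∑ i : Fin n, k i * y i.succ) ^ 2)
          ∧ 0 < y 0 - ∑ i : Fin n, k i * y i.succ}) := by
  intro h
  have hR : 0 < R := hr.trans hrR
  set j : Fin n := ⟨0, hn⟩ with hj
  set s : ℝ := if 0 ≤ k j then 1 else -1 with hs
  have hs2 : s ^ 2 = 1 := by
    rcases le_or_gt 0 (k j) with h' | h' <;> simp [hs, h', not_le.mpr] <;> norm_num
  have hsk : 0 ≤ s * k j := by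
    rcases le_or_gt 0 (k j) with h' | h'
    · rw [hs, if_pos h']; simpa
    · rw [hs, if_neg (not_le.mpr h')]; nlinarith
  set y : Fin (n + 1) → ℝ := Fin.cons 1 (fun i => if i = j then s * R else 0) with hy
  have hy0 : y 0 = 1 := rfl
  have hysucc : ∀ i : Fin n, y i.succ = if i = j then s * R else 0 := fun i => by
    simp [hy]
  have hsum : ∑ i : Fin n, (y i.succ) ^ 2 = R ^ 2 := by
    have : ∀ i : Fin n, (y i.succ) ^ 2 = if i = j then (s * R) ^ 2 else 0 := by
      intro i
      rw [hysucc i]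
      split <;> norm_num
    rw [Finset.sum_congr rfl fun i _ => this i, Finset.sum_ite_eq' Finset.univ j]
    simp [mul_pow, hs2]
  have hksum : ∑ i : Fin n, k i * y i.succ = k j * (s * R) := by
    have : ∀ i : Fin n, k i * y i.succ = if i = j then k j * (s * R) else 0 := by
      intro i
      rw [hysucc i]
      split
      · subst ‹i = j›; ring
      · ring
    rw [Finset.sum_congr rfl fun i _ => this i, Finset.sum_ite_eq' Finset.univ j]
    simp
  have hmem : y ∈ {y : Fin (n + 1) → ℝ |
      (0 < ∑ i : Fin n, (y i.succ) ^ 2 ∧ ∑ i : Fin n, (y i.succ) ^ 2 ≤ R ^ 2 * (y 0) ^ 2)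
      ∧ 0 < y 0} := by
    refine ⟨⟨?_, ?_⟩, ?_⟩
    · rw [hsum]; positivity
    · rw [hsum, hy0]; nlinarith
    · rw [hy0]; norm_num
  obtain ⟨⟨_, h2⟩, h3⟩ := h hmem
  rw [hsum, hksum, hy0] at h2
  rw [hksum, hy0] at h3
  have hS : 0 ≤ k j * (s * R) := by nlinarith
  nlinarith [mul_nonneg (mul_nonneg (sq_nonneg r) hS) h3.le, mul_nonneg (sq_nonneg r) hS, sq_nonneg (r + R)]
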